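/- arXiv:math/0408212 — 3 statements merged into one kernel-verified Lean document; each statement's English description precedes it below -/
import Mathlib

section
/- Let x be a nonzero element of L with v(x) < 0 and v(x) < M_v. Then for every n >= 1 one has phi^n(x) != 0 and v(phi^n(x)) = q^(r*n) * v(x); consequently the sequence min(0, v(phi^n(x)))/q^(r*n) converges to v(x) as n -> infinity. (Lemma 2.3 of the paper: under this hypothesis the local height of x equals -v(x) up to the normalization factor.) -/
open Filter Topology Finset

universe u

section Drinfeld

variable {L : Type u} [Field L] {k : Type*} [Field k]

/-- The integer value of the valuation `v` at `y` (junk value `0` at `y = 0`). -/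
noncomputable def vz (v : L → WithTop ℤ) (y : L) : ℤ := WithTop.untopD 0 (v y)

/-- `v : L → ℤ ∪ {∞}` is a normalized discrete valuation: `v 0 = ∞`, `v` is finite and
surjective onto `ℤ` on nonzero elements, `v (x * y) = v x + v y` and
`v (x + y) ≥ min (v x) (v y)`. -/
structure IsDVal (v : L → WithTop ℤ) : Prop where
  map_zero : v 0 = ⊤
  ne_top : ∀ x : L, x ≠ 0 → v x ≠ ⊤
  map_mul : ∀ x y : L, v (x * y) = v x + v y
  add_min : ∀ x y : L, min (v x) (v y) ≤ v (x + y)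
  surj : ∀ n : ℤ, ∃ x : L, v x = (n : WithTop ℤ)

/-- `res : L → k` restricted to the valuation ring of `v` is the quotient map onto the
residue field `k` of `v`. -/
structure IsResidue (v : L → WithTop ℤ) (res : L → k) : Prop where
  map_one : res 1 = 1
  map_add : ∀ x y : L, 0 ≤ v x → 0 ≤ v y → res (x + y) = res x + res y
  map_mul : ∀ x y : L, 0 ≤ v x → 0 ≤ v y → res (x * y) = res x * res y
  eq_zero_iff : ∀ x : L, 0 ≤ v x → (res x = 0 ↔ 0 < v x)
  surj : ∀ c : k, ∃ x : L, 0 ≤ v x ∧ res x = c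

/-- The angular component of `y` at `v`, with respect to the uniformizer `π` and the
residue map `res`: the residue of `y * π ^ (-v y)`. -/
noncomputable def ac (v : L → WithTop ℤ) (π : L) (res : L → k) (y : L) : k :=
  res (y * π ^ (-(vz v y)))

/-- The `F_q`-linear map `φ(x) = ∑_{i=r₀}^{r} a i * x^(q^i)`. -/
noncomputable def phiMap (q r₀ r : ℕ) (a : ℕ → L) (x : L) : L :=
  ∑ i ∈ Finset.Icc r₀ r, a i * x ^ q ^ i

/-- The set `P_v ⊆ ℚ` of possible exceptional valuations:
`(v(a i) - v(a j))/(q^j - q^i)` for `r₀ ≤ i < j ≤ r` with `a i ≠ 0 ≠ a j`, together with `0`. -/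
def Pset (q : ℕ) (v : L → WithTop ℤ) (r₀ r : ℕ) (a : ℕ → L) : Set ℚ :=
  {0} ∪ {α : ℚ | ∃ i j : ℕ, r₀ ≤ i ∧ i < j ∧ j ≤ r ∧ a i ≠ 0 ∧ a j ≠ 0 ∧
      α = ((vz v (a i) : ℚ) - (vz v (a j) : ℚ)) / ((q : ℚ) ^ j - (q : ℚ) ^ i)}

/-- The set `J(α)` of indices where `v(a i) + q^i * α` attains its minimum. -/
def Jset (q : ℕ) (v : L → WithTop ℤ) (r₀ r : ℕ) (a : ℕ → L) (α : ℚ) : Set ℕ :=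
  {i : ℕ | r₀ ≤ i ∧ i ≤ r ∧ a i ≠ 0 ∧
    ∀ j : ℕ, r₀ ≤ j → j ≤ r → a j ≠ 0 →
      (vz v (a i) : ℚ) + (q : ℚ) ^ i * α ≤ (vz v (a j) : ℚ) + (q : ℚ) ^ j * α}

open scoped Classical in
/-- The set `R_v(α) ⊆ k_v`: `1` together with the nonzero roots of
`∑_{i ∈ J(α)} ac(a i) * X^(q^i)`. -/
noncomputable def Rset (q : ℕ) (v : L → WithTop ℤ) (π : L) (res : L → k)
    (r₀ r : ℕ) (a : ℕ → L) (α : ℚ) : Set k :=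
  {1} ∪ {γ : k | γ ≠ 0 ∧
    ∑ i ∈ Finset.Icc r₀ r,
      (if i ∈ Jset q v r₀ r a α then ac v π res (a i) * γ ^ q ^ i else 0) = 0}

/-- The exceptional condition `Exc(y)`: `v y ∈ P_v` and `ac y ∈ R_v(v y)`. -/
def Exc (q : ℕ) (v : L → WithTop ℤ) (π : L) (res : L → k)
    (r₀ r : ℕ) (a : ℕ → L) (y : L) : Prop :=
  ((vz v y : ℚ) ∈ Pset q v r₀ r a) ∧ ac v π res y ∈ Rset q v π res r₀ r a ((vz v y : ℚ))

/-- The sequence `min(0, v(φⁿ x)) / q^(r n)` whose limit is minus the local height of `x`. -/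
noncomputable def locSeq (q r : ℕ) (v : L → WithTop ℤ) (φ : L → L) (x : L) (n : ℕ) : ℝ :=
  ((min 0 (vz v (φ^[n] x)) : ℤ) : ℝ) / (q : ℝ) ^ (r * n)


namespace IsDVal

variable {v : L → WithTop ℤ} (hv : IsDVal v)

lemma val_one (hv : IsDVal v) : v 1 = 0 := by
  have h := hv.map_mul 1 1
  rw [one_mul] at h
  obtain ⟨a, ha⟩ := WithTop.ne_top_iff_exists.mp (hv.ne_top 1 one_ne_zero)
  rw [← ha, ← WithTop.coe_add] at h
  have : a = a + a := WithTop.coe_injective h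
  have : a = 0 := by omega
  rw [← ha, this]; rfl

lemma val_neg (hv : IsDVal v) (y : L) : v (-y) = v y := by
  have hm1 : v (-1 : L) = 0 := by
    have h := hv.map_mul (-1) (-1)
    rw [neg_mul_neg, one_mul, hv.val_one] at h
    obtain ⟨a, ha⟩ := WithTop.ne_top_iff_exists.mp (hv.ne_top (-1) (by norm_num))
    rw [← ha, ← WithTop.coe_add] at h
    have : (0 : ℤ) = a + a := WithTop.coe_injective h
    have : a = 0 := by omega
    rw [← ha, this]; rfl
  have := hv.map_mul (-1) y
  rw [neg_one_mul, hm1, zero_add] at this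
  exact this

lemma val_add_of_lt (hv : IsDVal v) {y z : L} (h : v y < v z) : v (y + z) = v y := by
  refine le_antisymm ?_ (by rw [← min_eq_left h.le]; exact hv.add_min y z)
  by_contra hc
  push_neg at hc
  have h2 : v y ≥ min (v (y + z)) (v z) := by
    have := hv.add_min (y + z) (-z)
    rw [hv.val_neg] at this
    simpa using this
  rcases min_le_iff.mp h2 with h3 | h3
  · exact absurd h3 (not_le.mpr hc)
  · exact absurd h3 (not_le.mpr h)

lemma val_pow (hv : IsDVal v) {y : L} {m : ℤ} (hy : v y = (m : WithTop ℤ)) (n : ℕ) :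
    v (y ^ n) = ((n * m : ℤ) : WithTop ℤ) := by
  induction n with
  | zero => simpa using hv.val_one
  | succ n ih =>
    rw [pow_succ, hv.map_mul, ih, hy, ← WithTop.coe_add]
    congr 1
    push_cast
    ring

lemma val_sum_lt (hv : IsDVal v) {s : Finset ℕ} {f : ℕ → L} {c : ℤ}
    (h : ∀ i ∈ s, (c : WithTop ℤ) < v (f i)) :
    (c : WithTop ℤ) < v (∑ i ∈ s, f i) := by
  induction s using Finset.cons_induction with
  | empty => simp [hv.map_zero]
  | cons a s ha ih =>
    rw [Finset.sum_cons]
    refine lt_of_lt_of_le (lt_min (h a (Finset.mem_cons_self a s)) ?_) (hv.add_min _ _)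
    exact ih fun i hi => h i (Finset.mem_cons_of_mem hi)

end IsDVal

lemma vz_eq {v : L → WithTop ℤ} {y : L} {m : ℤ} (hy : v y = (m : WithTop ℤ)) :
    vz v y = m := by simp [vz, hy]

lemma phi_val {v : L → WithTop ℤ} (hv : IsDVal v) (q r₀ r : ℕ) (hq2 : 2 ≤ q)
    (hr1 : 1 ≤ r) (hr₀r : r₀ ≤ r) (a : ℕ → L) (har : a r = 1)
    {y : L} {m : ℤ} (hym : v y = (m : WithTop ℤ))
    (hcond : ∀ i ∈ Finset.Icc r₀ (r - 1), a i ≠ 0 →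
      ((q : ℤ) ^ r - (q : ℤ) ^ i) * m < vz v (a i)) :
    v (phiMap q r₀ r a y) = (((q : ℤ) ^ r * m : ℤ) : WithTop ℤ) := by
  have hicc : Finset.Icc r₀ r = insert r (Finset.Icc r₀ (r - 1)) := by
    ext i
    simp only [Finset.mem_Icc, Finset.mem_insert]
    omega
  have hnotmem : r ∉ Finset.Icc r₀ (r - 1) := by
    simp only [Finset.mem_Icc]; omega
  rw [phiMap, hicc, Finset.sum_insert hnotmem, har, one_mul]
  have hpow : v (y ^ q ^ r) = (((q : ℤ) ^ r * m : ℤ) : WithTop ℤ) := by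
    rw [hv.val_pow hym (q ^ r)]
    push_cast
    ring_nf
  have hrest : (((q : ℤ) ^ r * m : ℤ) : WithTop ℤ) <
      v (∑ i ∈ Finset.Icc r₀ (r - 1), a i * y ^ q ^ i) := by
    apply hv.val_sum_lt
    intro i hi
    by_cases hai : a i = 0
    · rw [hai, zero_mul, hv.map_zero]
      exact_mod_cast WithTop.coe_lt_top ((q : ℤ) ^ r * m)
    · obtain ⟨b, hb⟩ := WithTop.ne_top_iff_exists.mp (hv.ne_top (a i) hai)
      rw [hv.map_mul, ← hb, hv.val_pow hym, ← WithTop.coe_add, WithTop.coe_lt_coe]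
      have hb' : vz v (a i) = b := vz_eq hb.symm
      have := hcond i hi hai
      rw [hb'] at this
      push_cast
      linarith
  rw [hv.val_add_of_lt (by rw [hpow]; exact hrest)]
  exact hpow


/-- Lemma 2.3: if `v(x) < 0` and `v(x) < M_v`, then `v(φⁿ(x)) = q^(rn) v(x)` for all `n ≥ 1`,
and `min(0, v(φⁿ(x)))/q^(rn)` converges to `v(x)`. -/
theorem statement1
    (p q : ℕ) (hp : p.Prime) (hq : ∃ s : ℕ, 0 < s ∧ q = p ^ s)
    [CharP L p] (F : Subfield L) (hF : Nat.card F = q)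
    (v : L → WithTop ℤ) (hv : IsDVal v)
    (r₀ r : ℕ) (hr1 : 1 ≤ r) (hr₀r : r₀ ≤ r)
    (a : ℕ → L) (har₀ : a r₀ ≠ 0) (har : a r = 1)
    (x : L) (hx : x ≠ 0) (hneg : v x < 0)
    (hM : ∀ i ∈ Finset.Icc r₀ (r - 1), a i ≠ 0 →
      (vz v x : ℚ) < (vz v (a i) : ℚ) / ((q : ℚ) ^ r - (q : ℚ) ^ i)) :
    (∀ n : ℕ, 1 ≤ n → (phiMap q r₀ r a)^[n] x ≠ 0 ∧
      v ((phiMap q r₀ r a)^[n] x) = (((q : ℤ) ^ (r * n) * vz v x : ℤ) : WithTop ℤ)) ∧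
    Filter.Tendsto (locSeq q r v (phiMap q r₀ r a) x) Filter.atTop (nhds (vz v x : ℝ)) := by
  have hq2 : 2 ≤ q := by
    obtain ⟨s, hs, rfl⟩ := hq
    calc 2 ≤ p := hp.two_le
    _ ≤ p ^ s := Nat.le_self_pow hs.ne' p
  have hq1 : (1 : ℚ) < (q : ℚ) := by exact_mod_cast hq2
  obtain ⟨m, hm⟩ := WithTop.ne_top_iff_exists.mp (hv.ne_top x hx)
  have hm' : v x = (m : WithTop ℤ) := hm.symm
  have hmz : vz v x = m := vz_eq hm'
  have hmneg : m < 0 := by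
    rw [hm'] at hneg
    exact_mod_cast hneg
  have key : ∀ n : ℕ, (phiMap q r₀ r a)^[n] x ≠ 0 ∧
      v ((phiMap q r₀ r a)^[n] x) = (((q : ℤ) ^ (r * n) * m : ℤ) : WithTop ℤ) := by
    intro n
    induction n with
    | zero => simpa using ⟨hx, hm'⟩
    | succ n ih =>
      obtain ⟨hy0, hyv⟩ := ih
      have hcond : ∀ i ∈ Finset.Icc r₀ (r - 1), a i ≠ 0 →
          ((q : ℤ) ^ r - (q : ℤ) ^ i) * ((q : ℤ) ^ (r * n) * m) < vz v (a i) := by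
        intro i hi hai
        have h1 := hM i hi hai
        rw [hmz] at h1
        have hiltr : i < r := by
          simp only [Finset.mem_Icc] at hi
          omega
        have hqpos : (0 : ℚ) < (q : ℚ) ^ r - (q : ℚ) ^ i := by
          have : (q : ℚ) ^ i < (q : ℚ) ^ r := pow_lt_pow_right₀ hq1 hiltr
          linarith
        have h2 : ((q : ℚ) ^ r - (q : ℚ) ^ i) * (m : ℚ) < (vz v (a i) : ℚ) := by
          rw [lt_div_iff₀ hqpos] at h1
          linarith
        have h4 : (1 : ℚ) ≤ (q : ℚ) ^ (r * n) := one_le_pow₀ (by linarith)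
        have hmq : (m : ℚ) < 0 := by exact_mod_cast hmneg
        have h6 : (q : ℚ) ^ (r * n) * (m : ℚ) ≤ (m : ℚ) := by nlinarith
        have h5 : ((q : ℚ) ^ r - (q : ℚ) ^ i) * ((q : ℚ) ^ (r * n) * (m : ℚ)) <
            (vz v (a i) : ℚ) :=
          lt_of_le_of_lt (mul_le_mul_of_nonneg_left h6 hqpos.le) h2
        exact_mod_cast h5
      have hval := phi_val hv q r₀ r hq2 hr1 hr₀r a har hyv hcond
      rw [Function.iterate_succ_apply']
      refine ⟨?_, ?_⟩
      · intro h0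
        rw [h0, hv.map_zero] at hval
        exact WithTop.coe_ne_top hval.symm
      · rw [hval]
        congr 1
        ring
  constructor
  · intro n _
    exact ⟨(key n).1, by rw [(key n).2, hmz]⟩
  · have hloc : locSeq q r v (phiMap q r₀ r a) x = fun _ => (m : ℝ) := by
      funext n
      have hvz : vz v ((phiMap q r₀ r a)^[n] x) = (q : ℤ) ^ (r * n) * m :=
        vz_eq (key n).2
      have hle : (q : ℤ) ^ (r * n) * m ≤ 0 :=
        mul_nonpos_of_nonneg_of_nonpos (by positivity) hmneg.le
      have hq0 : ((q : ℝ)) ^ (r * n) ≠ 0 := by positivity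
      rw [locSeq, hvz, min_eq_right hle]
      push_cast
      field_simp
    rw [hmz, hloc]
    exact tendsto_const_nhds


end Drinfeld
end

section
/- Assume v lies in S. Let x be a nonzero element of L with v(x) <= 0 such that Exc(x) fails, and suppose it is not the case that q = 2, r = 1 and v(x) = 0. Then v(phi(x)) < M_v. (Lemma 2.5 of the paper.) -/
open Filter Topology Finset

universe u

section Drinfeld

variable {L : Type u} [Field L] {k : Type*} [Field k]

variable {v : L → WithTop ℤ}

lemma vcoe (hv : IsDVal v) {y : L} (hy : y ≠ 0) : v y = ((vz v y : ℤ) : WithTop ℤ) := by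
  obtain ⟨n, hn⟩ := WithTop.ne_top_iff_exists.mp (hv.ne_top y hy)
  rw [← hn]; simp [vz, ← hn]

lemma v_one (hv : IsDVal v) : v (1 : L) = 0 := by
  have h := hv.map_mul 1 1
  rw [mul_one] at h
  obtain ⟨n, hn⟩ := WithTop.ne_top_iff_exists.mp (hv.ne_top 1 one_ne_zero)
  rw [← hn] at h
  have : (n : WithTop ℤ) = (n + n : ℤ) := by exact_mod_cast h
  have : n = n + n := by exact_mod_cast this
  have : n = 0 := by omega
  rw [← hn, this]; rfl

lemma vz_mul (hv : IsDVal v) {y z : L} (hy : y ≠ 0) (hz : z ≠ 0) :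
    vz v (y * z) = vz v y + vz v z := by
  have h := hv.map_mul y z
  rw [vcoe hv hy, vcoe hv hz, vcoe hv (mul_ne_zero hy hz)] at h
  exact_mod_cast h

lemma vz_pow (hv : IsDVal v) {y : L} (hy : y ≠ 0) (n : ℕ) :
    vz v (y ^ n) = n * vz v y := by
  induction n with
  | zero => simp [vz, v_one hv]
  | succ n ih =>
    rw [pow_succ, vz_mul hv (pow_ne_zero n hy) hy, ih]; push_cast; ring

lemma vz_inv (hv : IsDVal v) {y : L} (hy : y ≠ 0) : vz v y⁻¹ = - vz v y := by
  have h := vz_mul hv hy (inv_ne_zero hy)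
  rw [mul_inv_cancel₀ hy] at h
  have h1 : vz v (1 : L) = 0 := by simp [vz, v_one hv]
  omega

lemma vz_zpow (hv : IsDVal v) {y : L} (hy : y ≠ 0) (n : ℤ) :
    vz v (y ^ n) = n * vz v y := by
  induction n using Int.induction_on with
  | zero => simp [vz, v_one hv]
  | succ n ih => rw [zpow_add_one₀ hy, vz_mul hv (zpow_ne_zero _ hy) hy, ih]; ring
  | pred n ih =>
    rw [zpow_sub_one₀ hy, vz_mul hv (zpow_ne_zero _ hy) (inv_ne_zero hy), ih, vz_inv hv hy]; ring


variable {v : L → WithTop ℤ} {res : L → k}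


lemma res_zero (hv : IsDVal v) (hres : IsResidue v res) : res (0 : L) = 0 := by
  have h0 : (0 : WithTop ℤ) ≤ v 0 := by rw [hv.map_zero]; exact le_top
  rw [hres.eq_zero_iff 0 h0, hv.map_zero]; exact WithTop.coe_lt_top 0

lemma res_sum (hv : IsDVal v) (hres : IsResidue v res) {ι : Type*} (s : Finset ι) (f : ι → L)
    (h : ∀ i ∈ s, 0 ≤ v (f i)) :
    0 ≤ v (∑ i ∈ s, f i) ∧ res (∑ i ∈ s, f i) = ∑ i ∈ s, res (f i) := by
  classical
  induction s using Finset.cons_induction with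
  | empty => simp [res_zero hv hres, hv.map_zero, le_top]
  | cons a s ha ih =>
    have h1 := h a (Finset.mem_cons_self a s)
    obtain ⟨h2, h3⟩ := ih (fun i hi => h i (Finset.mem_cons_of_mem hi))
    have h4 : (0 : WithTop ℤ) ≤ v (f a + ∑ i ∈ s, f i) :=
      le_trans (le_min h1 h2) (hv.add_min _ _)
    rw [Finset.sum_cons, Finset.sum_cons]
    exact ⟨h4, by rw [hres.map_add _ _ h1 h2, h3]⟩

lemma res_pow (hv : IsDVal v) (hres : IsResidue v res) {y : L} (hy : 0 ≤ v y) (n : ℕ) :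
    res (y ^ n) = res y ^ n := by
  have hyn : ∀ m : ℕ, 0 ≤ v (y ^ m) := by
    intro m
    induction m with
    | zero => simp [v_one hv]
    | succ m ih => rw [pow_succ, hv.map_mul]; positivity
  induction n with
  | zero => simp [hres.map_one]
  | succ n ih => rw [pow_succ, hres.map_mul _ _ (hyn n) hy, ih, pow_succ]

lemma ac_ne_zero (hv : IsDVal v) (hres : IsResidue v res) {π : L} (hπ : v π = 1)
    {y : L} (hy : y ≠ 0) : ac v π res y ≠ 0 := by
  have hπ0 : π ≠ 0 := by intro h; rw [h, hv.map_zero] at hπ; exact absurd hπ (by simp)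
  have hvzπ : vz v π = 1 := by rw [vz, hπ]; rfl
  have hne : y * π ^ (-(vz v y)) ≠ 0 := mul_ne_zero hy (zpow_ne_zero _ hπ0)
  have hvz : vz v (y * π ^ (-(vz v y))) = 0 := by
    rw [vz_mul hv hy (zpow_ne_zero _ hπ0), vz_zpow hv hπ0, hvzπ]; ring
  have h0 : v (y * π ^ (-(vz v y))) = 0 := by rw [vcoe hv hne, hvz]; rfl
  rw [ac, Ne, hres.eq_zero_iff _ (le_of_eq h0.symm), h0]
  simp

lemma key_term (hv : IsDVal v) (hres : IsResidue v res) {π : L} (hπ : v π = 1)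
    {b x : L} (hb : b ≠ 0) (hx : x ≠ 0) (n : ℕ) (m : ℤ)
    (hm : m ≤ vz v b + n * vz v x) :
    0 ≤ v (b * x ^ n * π ^ (-m)) ∧
    res (b * x ^ n * π ^ (-m)) =
      if vz v b + n * vz v x = m then ac v π res b * (ac v π res x) ^ n else 0 := by
  have hπ0 : π ≠ 0 := by intro h; rw [h, hv.map_zero] at hπ; exact absurd hπ (by simp)
  have hvzπ : vz v π = 1 := by rw [vz, hπ]; rfl
  set d : ℕ := (vz v b + n * vz v x - m).toNat with hdef
  have hd : (d : ℤ) = vz v b + n * vz v x - m := Int.toNat_of_nonneg (by omega)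
  set A : L := b * π ^ (-(vz v b)) with hA
  set B : L := x * π ^ (-(vz v x)) with hB
  have hA0 : A ≠ 0 := mul_ne_zero hb (zpow_ne_zero _ hπ0)
  have hB0 : B ≠ 0 := mul_ne_zero hx (zpow_ne_zero _ hπ0)
  have hvA : vz v A = 0 := by
    rw [hA, vz_mul hv hb (zpow_ne_zero _ hπ0), vz_zpow hv hπ0, hvzπ]; ring
  have hvB : vz v B = 0 := by
    rw [hB, vz_mul hv hx (zpow_ne_zero _ hπ0), vz_zpow hv hπ0, hvzπ]; ring
  have hvA' : v A = 0 := by rw [vcoe hv hA0, hvA]; rfl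
  have hvB' : v B = 0 := by rw [vcoe hv hB0, hvB]; rfl
  have hvBn : v (B ^ n) = 0 := by
    rw [vcoe hv (pow_ne_zero _ hB0), vz_pow hv hB0, hvB, mul_zero]; rfl
  have hident : b * x ^ n * π ^ (-m) = A * B ^ n * π ^ d := by
    rw [hA, hB, mul_pow, ← zpow_natCast (π ^ (-(vz v x))) n, ← zpow_mul,
      ← zpow_natCast π d]
    rw [show b * π ^ (-(vz v b)) * (x ^ n * π ^ ((-(vz v x)) * (n : ℤ))) * π ^ (d : ℤ)
        = b * x ^ n * (π ^ (-(vz v b)) * π ^ ((-(vz v x)) * (n : ℤ)) * π ^ (d : ℤ)) from by ring]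
    rw [← zpow_add₀ hπ0, ← zpow_add₀ hπ0]
    congr 1
    rw [show -vz v b + -vz v x * (n : ℤ) + (d : ℤ) = -m from by linear_combination hd]
  rw [hident]
  have hAB : v (A * B ^ n) = 0 := by rw [hv.map_mul, hvA', hvBn]; rfl
  have hπd : v (π ^ d) = (d : ℤ) := by
    rw [vcoe hv (pow_ne_zero _ hπ0), vz_pow hv hπ0, hvzπ, mul_one]
  have hπd0 : (0 : WithTop ℤ) ≤ v (π ^ d) := by rw [hπd]; exact_mod_cast Int.ofNat_nonneg d
  constructor
  · rw [hv.map_mul, hAB, hπd, zero_add]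
    exact_mod_cast Int.ofNat_nonneg d
  · rw [hres.map_mul _ _ (le_of_eq hAB.symm) hπd0,
      hres.map_mul _ _ (le_of_eq hvA'.symm) (le_of_eq hvBn.symm),
      res_pow hv hres (le_of_eq hvB'.symm)]
    have hresA : res A = ac v π res b := rfl
    have hresB : res B = ac v π res x := rfl
    rw [hresA, hresB]
    by_cases hcase : vz v b + (n : ℤ) * vz v x = m
    · have hd0 : d = 0 := by omega
      rw [if_pos hcase, hd0, pow_zero, hres.map_one, mul_one]
    · have hd0 : 0 < (d : ℤ) := by omega
      have : res (π ^ d) = 0 := by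
        rw [hres.eq_zero_iff _ hπd0, hπd]; exact_mod_cast hd0
      rw [if_neg hcase, this, mul_zero]


/-- Lemma 2.5: if `v ∈ S`, `v(x) ≤ 0`, `Exc(x)` fails, and we are not in the special case
`q = 2`, `r = 1`, `v(x) = 0`, then `v(φ(x)) < M_v`. -/
theorem statement3
    (p q : ℕ) (hp : p.Prime) (hq : ∃ s : ℕ, 0 < s ∧ q = p ^ s)
    [CharP L p] (F : Subfield L) (hF : Nat.card F = q)
    (v : L → WithTop ℤ) (hv : IsDVal v)
    (π : L) (hπ : v π = 1) (res : L → k) (hres : IsResidue v res)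
    (r₀ r : ℕ) (hr1 : 1 ≤ r) (hr₀r : r₀ ≤ r)
    (a : ℕ → L) (har₀ : a r₀ ≠ 0) (har : a r = 1)
    (hS : ∃ i ∈ Finset.Icc r₀ (r - 1), v (a i) < 0)
    (x : L) (hx : x ≠ 0) (hvx : v x ≤ 0)
    (hexc : ¬ Exc q v π res r₀ r a x)
    (hspecial : ¬ (q = 2 ∧ r = 1 ∧ v x = 0)) :
    phiMap q r₀ r a x ≠ 0 ∧
    ∀ i ∈ Finset.Icc r₀ (r - 1), a i ≠ 0 →
      (vz v (phiMap q r₀ r a x) : ℚ) < (vz v (a i) : ℚ) / ((q : ℚ) ^ r - (q : ℚ) ^ i) := by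
  classical
  have hq2 : 2 ≤ q := by
    obtain ⟨s, hs, rfl⟩ := hq
    calc 2 ≤ p := hp.two_le
    _ = p ^ 1 := (pow_one p).symm
    _ ≤ p ^ s := Nat.pow_le_pow_right hp.pos hs
  have hq1 : (1 : ℚ) < q := by exact_mod_cast hq2
  have hπ0 : π ≠ 0 := by
    intro h; rw [h, hv.map_zero] at hπ; exact absurd hπ (by simp)
  have hvzπ : vz v π = 1 := by rw [vz, hπ]; rfl
  have hvxeq : v x = ((vz v x : ℤ) : WithTop ℤ) := vcoe hv hx
  have ht : vz v x ≤ 0 := by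
    rw [hvxeq] at hvx; exact_mod_cast hvx
  set T : Finset ℕ := (Finset.Icc r₀ r).filter (fun i => a i ≠ 0) with hT_def
  have hrT : r ∈ T := by
    rw [hT_def]
    exact Finset.mem_filter.mpr ⟨Finset.mem_Icc.mpr ⟨hr₀r, le_refl r⟩, by rw [har]; exact one_ne_zero⟩
  have hTne : T.Nonempty := ⟨r, hrT⟩
  have hTa : ∀ i ∈ T, a i ≠ 0 := fun i hi => (Finset.mem_filter.mp hi).2
  have hTicc : ∀ i ∈ T, r₀ ≤ i ∧ i ≤ r := fun i hi =>
    Finset.mem_Icc.mp (Finset.mem_filter.mp hi).1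
  obtain ⟨i0, hi0T, hi0min'⟩ :=
    T.exists_min_image (fun i => vz v (a i) + ((q ^ i : ℕ) : ℤ) * vz v x) hTne
  have hmin : ∀ i ∈ T, vz v (a i0) + ((q ^ i0 : ℕ) : ℤ) * vz v x ≤
      vz v (a i) + ((q ^ i : ℕ) : ℤ) * vz v x := fun i hi => hi0min' i hi
  set m : ℤ := vz v (a i0) + ((q ^ i0 : ℕ) : ℤ) * vz v x with hm_def
  -- key term facts
  have hkey : ∀ i ∈ T, 0 ≤ v (a i * x ^ q ^ i * π ^ (-m)) ∧
      res (a i * x ^ q ^ i * π ^ (-m)) =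
        if vz v (a i) + ((q ^ i : ℕ) : ℤ) * vz v x = m then
          ac v π res (a i) * (ac v π res x) ^ q ^ i else 0 := by
    intro i hi
    exact key_term hv hres hπ (hTa i hi) hx (q ^ i) m (hmin i hi)
  have hsum := res_sum hv hres T (fun i => a i * x ^ q ^ i * π ^ (-m))
    (fun i hi => (hkey i hi).1)
  have hres_sum_eq : res (∑ i ∈ T, a i * x ^ q ^ i * π ^ (-m)) =
      ∑ i ∈ T, (if vz v (a i) + ((q ^ i : ℕ) : ℤ) * vz v x = m then
        ac v π res (a i) * (ac v π res x) ^ q ^ i else 0) := by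
    rw [hsum.2]
    exact Finset.sum_congr rfl (fun i hi => (hkey i hi).2)
  have hacx : ac v π res x ≠ 0 := ac_ne_zero hv hres hπ hx
  -- the residue sum is nonzero
  have hSne : (∑ i ∈ T, (if vz v (a i) + ((q ^ i : ℕ) : ℤ) * vz v x = m then
      ac v π res (a i) * (ac v π res x) ^ q ^ i else 0)) ≠ 0 := by
    simp only [Exc, not_and_or] at hexc
    rcases hexc with hP | hR
    · -- v x not in Pset: minimum attained at a single index
      have hcross : ∀ i j : ℕ, i ∈ T → j ∈ T → i < j →
          vz v (a i) + ((q ^ i : ℕ) : ℤ) * vz v x =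
            vz v (a j) + ((q ^ j : ℕ) : ℤ) * vz v x → False := by
        intro i j hiT hjT hij heq
        apply hP
        refine Set.mem_union_right _ ⟨i, j, (hTicc i hiT).1, hij, (hTicc j hjT).2,
          hTa i hiT, hTa j hjT, ?_⟩
        have hqij : (q : ℚ) ^ i < (q : ℚ) ^ j := by
          exact pow_lt_pow_right₀ hq1 hij
        rw [eq_div_iff (by linarith : (q : ℚ) ^ j - (q : ℚ) ^ i ≠ 0)]
        have hQ : (vz v (a i) : ℚ) + (q : ℚ) ^ i * (vz v x : ℚ) =
            (vz v (a j) : ℚ) + (q : ℚ) ^ j * (vz v x : ℚ) := by exact_mod_cast heq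
        linear_combination -hQ
      have huniq : ∀ i ∈ T, i ≠ i0 →
          ¬(vz v (a i) + ((q ^ i : ℕ) : ℤ) * vz v x = m) := by
        intro i hiT hne heq
        rcases lt_trichotomy i i0 with h | h | h
        · exact hcross i i0 hiT hi0T h (by rw [heq, hm_def])
        · exact hne h
        · exact hcross i0 i hi0T hiT h (by rw [heq, hm_def])
      rw [Finset.sum_eq_single_of_mem i0 hi0T
        (fun i hiT hne => if_neg (huniq i hiT hne)), if_pos hm_def.symm]
      exact mul_ne_zero (ac_ne_zero hv hres hπ (hTa i0 hi0T)) (pow_ne_zero _ hacx)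
    · -- ac x not in Rset
      have hJiff : ∀ i : ℕ, i ∈ Jset q v r₀ r a ((vz v x : ℤ) : ℚ) ↔
          (i ∈ T ∧ vz v (a i) + ((q ^ i : ℕ) : ℤ) * vz v x = m) := by
        intro i
        constructor
        · intro hJ
          obtain ⟨h1, h2, h3, h4⟩ := hJ
          have hiT : i ∈ T := Finset.mem_filter.mpr ⟨Finset.mem_Icc.mpr ⟨h1, h2⟩, h3⟩
          refine ⟨hiT, le_antisymm ?_ (hmin i hiT)⟩
          have h5 := h4 i0 (hTicc i0 hi0T).1 (hTicc i0 hi0T).2 (hTa i0 hi0T)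
          rw [hm_def]
          exact_mod_cast h5
        · rintro ⟨hiT, heq⟩
          refine ⟨(hTicc i hiT).1, (hTicc i hiT).2, hTa i hiT, ?_⟩
          intro j hj1 hj2 hj3
          have hjT : j ∈ T := Finset.mem_filter.mpr ⟨Finset.mem_Icc.mpr ⟨hj1, hj2⟩, hj3⟩
          have h6 : vz v (a i) + ((q ^ i : ℕ) : ℤ) * vz v x ≤
              vz v (a j) + ((q ^ j : ℕ) : ℤ) * vz v x := heq ▸ hmin j hjT
          exact_mod_cast h6
      have hR' : (∑ i ∈ Finset.Icc r₀ r,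
          (if i ∈ Jset q v r₀ r a ((vz v x : ℤ) : ℚ) then
            ac v π res (a i) * (ac v π res x) ^ q ^ i else 0)) ≠ 0 := by
        intro h0
        exact hR (Set.mem_union_right _ ⟨hacx, h0⟩)
      have hsum_eq : (∑ i ∈ T, (if vz v (a i) + ((q ^ i : ℕ) : ℤ) * vz v x = m then
          ac v π res (a i) * (ac v π res x) ^ q ^ i else 0)) =
          ∑ i ∈ Finset.Icc r₀ r,
          (if i ∈ Jset q v r₀ r a ((vz v x : ℤ) : ℚ) then
            ac v π res (a i) * (ac v π res x) ^ q ^ i else 0) := by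
        rw [hT_def, Finset.sum_filter]
        refine Finset.sum_congr rfl ?_
        intro i hi
        by_cases hJ : i ∈ Jset q v r₀ r a ((vz v x : ℤ) : ℚ)
        · obtain ⟨hiT, heq⟩ := (hJiff i).mp hJ
          rw [if_pos (hTa i hiT), if_pos heq, if_pos hJ]
        · rw [if_neg hJ]
          by_cases ha0 : a i ≠ 0
          · rw [if_pos ha0, if_neg (fun heq => hJ ((hJiff i).mpr
              ⟨Finset.mem_filter.mpr ⟨hi, ha0⟩, heq⟩))]
          · rw [if_neg ha0]
      rw [hsum_eq]
      exact hR'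
  -- the valuation of the sum is exactly 0 after normalization
  have hv0 : v (∑ i ∈ T, a i * x ^ q ^ i * π ^ (-m)) = 0 := by
    have hne0 : res (∑ i ∈ T, a i * x ^ q ^ i * π ^ (-m)) ≠ 0 := by
      rw [hres_sum_eq]; exact hSne
    have hnlt : ¬(0 < v (∑ i ∈ T, a i * x ^ q ^ i * π ^ (-m))) :=
      fun h => hne0 ((hres.eq_zero_iff _ hsum.1).mpr h)
    exact le_antisymm (not_lt.mp hnlt) hsum.1
  have hφeq : (∑ i ∈ T, a i * x ^ q ^ i * π ^ (-m)) = phiMap q r₀ r a x * π ^ (-m) := by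
    rw [phiMap, Finset.sum_mul, hT_def]
    apply Finset.sum_filter_of_ne
    intro i _ hne h0
    apply hne
    rw [h0, zero_mul, zero_mul]
  rw [hφeq] at hv0
  have hφ0 : phiMap q r₀ r a x ≠ 0 := by
    intro h
    rw [h, zero_mul, hv.map_zero] at hv0
    exact (by simp : (⊤ : WithTop ℤ) ≠ 0) hv0
  have hvφ : vz v (phiMap q r₀ r a x) = m := by
    have h1 : vz v (phiMap q r₀ r a x * π ^ (-m)) = 0 := by
      rw [vz, hv0]; rfl
    rw [vz_mul hv hφ0 (zpow_ne_zero _ hπ0), vz_zpow hv hπ0, hvzπ] at h1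
    omega
  refine ⟨hφ0, ?_⟩
  intro i hi hai
  rw [hvφ]
  have hiIcc := Finset.mem_Icc.mp hi
  have hir : i < r := by omega
  have hiT : i ∈ T := Finset.mem_filter.mpr
    ⟨Finset.mem_Icc.mpr ⟨hiIcc.1, le_of_lt hir⟩, hai⟩
  have hmi : m ≤ vz v (a i) + ((q ^ i : ℕ) : ℤ) * vz v x := hmin i hiT
  -- m < 0
  obtain ⟨j, hjmem, hvaj⟩ := hS
  have haj : a j ≠ 0 := by
    intro h; rw [h, hv.map_zero] at hvaj; exact absurd hvaj (by simp)
  have hjIcc := Finset.mem_Icc.mp hjmem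
  have hjT : j ∈ T := Finset.mem_filter.mpr
    ⟨Finset.mem_Icc.mpr ⟨hjIcc.1, by omega⟩, haj⟩
  have hvzaj : vz v (a j) < 0 := by
    rw [vcoe hv haj] at hvaj; exact_mod_cast hvaj
  have hmneg : m < 0 := by
    have h1 := hmin j hjT
    have h2 : ((q ^ j : ℕ) : ℤ) * vz v x ≤ 0 :=
      mul_nonpos_of_nonneg_of_nonpos (by positivity) ht
    calc m ≤ vz v (a j) + ((q ^ j : ℕ) : ℤ) * vz v x := h1
    _ ≤ vz v (a j) := by linarith
    _ < 0 := hvzaj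
  have hD : (0 : ℚ) < (q : ℚ) ^ r - (q : ℚ) ^ i :=
    sub_pos.mpr (pow_lt_pow_right₀ hq1 hir)
  have hmiQ : (m : ℚ) ≤ (vz v (a i) : ℚ) + (q : ℚ) ^ i * (vz v x : ℚ) := by
    exact_mod_cast hmi
  have htQ : ((vz v x : ℤ) : ℚ) ≤ 0 := by exact_mod_cast ht
  by_cases hc : 0 ≤ vz v (a i)
  · have hrhs : (0 : ℚ) ≤ (vz v (a i) : ℚ) / ((q : ℚ) ^ r - (q : ℚ) ^ i) :=
      div_nonneg (by exact_mod_cast hc) (le_of_lt hD)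
    calc (m : ℚ) < 0 := by exact_mod_cast hmneg
    _ ≤ _ := hrhs
  · push_neg at hc
    have hcQ : ((vz v (a i) : ℤ) : ℚ) < 0 := by exact_mod_cast hc
    by_cases hsp : q = 2 ∧ r = 1
    · have hi00 : i = 0 := by omega
      have htne : vz v x ≠ 0 := by
        intro h0
        exact hspecial ⟨hsp.1, hsp.2, by rw [hvxeq, h0]; rfl⟩
      have htQ' : ((vz v x : ℤ) : ℚ) < 0 := by
        have : vz v x < 0 := lt_of_le_of_ne ht htne
        exact_mod_cast this
      obtain ⟨hq2', hr1'⟩ := hsp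
      subst hq2' hr1' hi00
      rw [show ((2 : ℕ) : ℚ) ^ 1 - ((2 : ℕ) : ℚ) ^ 0 = 1 by norm_num, div_one]
      have h00 : ((2 : ℕ) : ℚ) ^ 0 = 1 := by norm_num
      rw [h00] at hmiQ
      linarith
    · have h2D : (q : ℚ) ^ i + 2 ≤ (q : ℚ) ^ r := by
        have hN : q ^ i + 2 ≤ q ^ r := by
          rcases Nat.eq_zero_or_pos i with hi0' | hi0'
          · subst hi0'
            simp only [pow_zero]
            by_cases hq2' : q = 2
            · have hr2 : 2 ≤ r := by
                rcases Nat.lt_or_ge r 2 with h | h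
                · exact absurd ⟨hq2', by omega⟩ hsp
                · exact h
              calc 1 + 2 ≤ 2 ^ 2 := by norm_num
              _ ≤ q ^ r := by rw [hq2']; exact Nat.pow_le_pow_right (by norm_num) hr2
            · calc 1 + 2 ≤ q := by omega
              _ = q ^ 1 := (pow_one q).symm
              _ ≤ q ^ r := Nat.pow_le_pow_right (by omega) hr1
          · have hqi2 : 2 ≤ q ^ i := by
              calc 2 ≤ q := hq2
              _ = q ^ 1 := (pow_one q).symm
              _ ≤ q ^ i := Nat.pow_le_pow_right (by omega) hi0'
            have hstep : q ^ (i + 1) ≤ q ^ r := Nat.pow_le_pow_right (by omega) (by omega)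
            have hsucc : q ^ (i + 1) = q ^ i * q := pow_succ q i
            nlinarith
        exact_mod_cast hN
      have hgt1 : (1 : ℚ) < (q : ℚ) ^ r - (q : ℚ) ^ i := by
        have : (0 : ℚ) < (q : ℚ) ^ i := by positivity
        linarith
      have hlast : ((vz v (a i) : ℤ) : ℚ) <
          ((vz v (a i) : ℤ) : ℚ) / ((q : ℚ) ^ r - (q : ℚ) ^ i) := by
        rw [lt_div_iff₀ hD]
        nlinarith
      have hterm : (q : ℚ) ^ i * ((vz v x : ℤ) : ℚ) ≤ 0 :=
        mul_nonpos_of_nonneg_of_nonpos (by positivity) htQ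
      linarith


end Drinfeld
end

section
/- Assume r_0 >= 1 (phi has no linear term, the finite-characteristic inseparable case). Let x be a nonzero element of L with v(x) >= N_v. Then v(phi^n(x)) >= v(x) for every n >= 1 (with the convention v(0) = +infinity); consequently the sequence min(0, v(phi^n(x)))/q^(r*n) converges to 0, i.e. the local height of x vanishes. (Lemma 2.11 of the paper.) -/
open Filter Topology Finset

universe u

section Drinfeld

variable {L : Type u} [Field L] {k : Type*} [Field k]

lemma IsDVal.map_one' {v : L → WithTop ℤ} (hv : IsDVal v) : v 1 = 0 := by
  have h := hv.map_mul 1 1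
  rw [one_mul] at h
  have h1 := hv.ne_top 1 one_ne_zero
  obtain ⟨m, hm⟩ := WithTop.ne_top_iff_exists.1 h1
  rw [← hm] at h ⊢
  have hm' : m = m + m := by exact_mod_cast h
  have : m = 0 := by omega
  simp [this]

lemma IsDVal.pow_coe {v : L → WithTop ℤ} (hv : IsDVal v) {y : L} {n : ℤ}
    (hy : v y = (n : WithTop ℤ)) (c : ℕ) :
    v (y ^ c) = (((c : ℤ) * n : ℤ) : WithTop ℤ) := by
  induction c with
  | zero => simpa using hv.map_one'
  | succ c ih =>
      rw [pow_succ, hv.map_mul, ih, hy, ← WithTop.coe_add]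
      congr 1
      push_cast
      ring

lemma IsDVal.le_sum {v : L → WithTop ℤ} (hv : IsDVal v) {ι : Type*} (s : Finset ι)
    (f : ι → L) (c : WithTop ℤ) (h : ∀ i ∈ s, c ≤ v (f i)) :
    c ≤ v (∑ i ∈ s, f i) := by
  classical
  induction s using Finset.induction with
  | empty => simp [hv.map_zero]
  | insert _ _ hns ih =>
      rw [Finset.sum_insert hns]
      refine le_trans ?_ (hv.add_min _ _)
      simp only [le_min_iff]
      exact ⟨h _ (Finset.mem_insert_self _ _), ih fun i hi => h _ (Finset.mem_insert_of_mem hi)⟩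

/-- Lemma 2.11: if `r₀ ≥ 1` and `v(x) ≥ N_v`, then `v(φⁿ(x)) ≥ v(x)` for all `n ≥ 1` and the
local-height sequence tends to `0`. -/
theorem statement7
    (p q : ℕ) (hp : p.Prime) (hq : ∃ s : ℕ, 0 < s ∧ q = p ^ s)
    [CharP L p] (F : Subfield L) (hF : Nat.card F = q)
    (v : L → WithTop ℤ) (hv : IsDVal v)
    (r₀ r : ℕ) (hr1 : 1 ≤ r) (hr₀r : r₀ ≤ r) (hr₀1 : 1 ≤ r₀)
    (a : ℕ → L) (har₀ : a r₀ ≠ 0) (har : a r = 1)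
    (x : L) (hx : x ≠ 0)
    (hN : ∀ i ∈ Finset.Icc r₀ r, a i ≠ 0 →
      -(vz v (a i) : ℚ) / ((q : ℚ) ^ i - 1) ≤ (vz v x : ℚ)) :
    (∀ n : ℕ, 1 ≤ n → v x ≤ v ((phiMap q r₀ r a)^[n] x)) ∧
    Filter.Tendsto (locSeq q r v (phiMap q r₀ r a) x) Filter.atTop (nhds (0 : ℝ)) := by
  obtain ⟨s, hs, rfl⟩ := hq
  have hq2 : 2 ≤ p ^ s := by
    calc 2 ≤ p := hp.two_le
    _ ≤ p ^ s := Nat.le_self_pow (by omega) p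
  set q := p ^ s with hqdef
  -- valuation of x
  obtain ⟨m, hm⟩ := WithTop.ne_top_iff_exists.1 (hv.ne_top x hx)
  have hvzx : vz v x = m := by rw [vz, ← hm]; rfl
  set φ := phiMap q r₀ r a with hφ
  -- key step
  have hstep : ∀ y : L, v x ≤ v y → v x ≤ v (φ y) := by
    intro y hy
    rw [hφ, phiMap]
    refine hv.le_sum _ _ _ ?_
    intro i hi
    rcases eq_or_ne (a i) 0 with hai | hai
    · simp [hai, hv.map_zero]
    rcases eq_or_ne y 0 with hy0 | hy0
    · have hqi : q ^ i ≠ 0 := by positivity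
      simp [hy0, zero_pow hqi, hv.map_zero]
    -- nonzero case
    obtain ⟨b, hb⟩ := WithTop.ne_top_iff_exists.1 (hv.ne_top _ hai)
    obtain ⟨n0, hn0⟩ := WithTop.ne_top_iff_exists.1 (hv.ne_top y hy0)
    have hvzb : vz v (a i) = b := by rw [vz, ← hb]; rfl
    have hmn : m ≤ n0 := by
      rw [← hm, ← hn0] at hy; exact_mod_cast hy
    rw [hv.map_mul, hv.pow_coe hn0.symm, ← hb, ← WithTop.coe_add, ← hm,
      WithTop.coe_le_coe]
    -- integer inequality
    have hiIcc := Finset.mem_Icc.1 hi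
    have hqQ : (1 : ℚ) < (q : ℚ) := by exact_mod_cast hq2
    have h1i : (1 : ℚ) < (q : ℚ) ^ i := by
      calc (1 : ℚ) < (q : ℚ) := hqQ
      _ = (q : ℚ) ^ 1 := (pow_one _).symm
      _ ≤ (q : ℚ) ^ i := by
        apply pow_le_pow_right₀ hqQ.le
        omega
    have hN' := hN i hi hai
    rw [hvzb, hvzx, div_le_iff₀ (by linarith)] at hN'
    have hZ : -b ≤ m * ((q : ℤ) ^ i - 1) := by exact_mod_cast hN'
    have hpow1 : (1 : ℤ) ≤ (q : ℤ) ^ i := by exact_mod_cast Nat.one_le_pow i q (by omega)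
    have hmul : (q : ℤ) ^ i * m ≤ (q : ℤ) ^ i * n0 :=
      mul_le_mul_of_nonneg_left hmn (by positivity)
    have : ((q ^ i : ℕ) : ℤ) = (q : ℤ) ^ i := by push_cast; ring
    rw [this]
    nlinarith
  -- iterate
  have hiter : ∀ n : ℕ, v x ≤ v (φ^[n] x) := by
    intro n
    induction n with
    | zero => simp
    | succ n ih =>
        rw [Function.iterate_succ_apply']
        exact hstep _ ih
  refine ⟨fun n _ => hiter n, ?_⟩
  -- bound on min part
  have hbound : ∀ n : ℕ, |(min 0 (vz v (φ^[n] x)) : ℤ)| ≤ |m| := by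
    intro n
    rcases eq_or_ne (φ^[n] x) 0 with h0 | h0
    · have hz : vz v (φ^[n] x) = 0 := by rw [vz, h0, hv.map_zero]; rfl
      rw [hz]
      simp
    · obtain ⟨kn, hkn⟩ := WithTop.ne_top_iff_exists.1 (hv.ne_top _ h0)
      have hvzk : vz v (φ^[n] x) = kn := by rw [vz, ← hkn]; rfl
      have hmk : m ≤ kn := by
        have := hiter n; rw [← hm, ← hkn] at this; exact_mod_cast this
      rw [hvzk, abs_le]
      refine ⟨le_min ?_ ?_, le_trans (min_le_left _ _) (abs_nonneg m)⟩
      · exact neg_nonpos_of_nonneg (abs_nonneg m)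
      · exact le_trans (neg_abs_le m) hmk
  -- convergence
  have hqR : (1 : ℝ) < (q : ℝ) := by exact_mod_cast hq2
  have hqr1 : (1 : ℝ) < (q : ℝ) ^ r := by
    calc (1 : ℝ) < (q : ℝ) := hqR
    _ = (q : ℝ) ^ 1 := (pow_one _).symm
    _ ≤ (q : ℝ) ^ r := pow_le_pow_right₀ hqR.le hr1
  have hg : Tendsto (fun n : ℕ => |(m : ℝ)| * (((q : ℝ) ^ r)⁻¹) ^ n) atTop (nhds 0) := by
    have h1 : |((q : ℝ) ^ r)⁻¹| < 1 := by
      rw [abs_of_pos (by positivity)]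
      rw [inv_lt_one_iff₀]
      right; exact hqr1
    have := (tendsto_pow_atTop_nhds_zero_of_abs_lt_one h1).const_mul (|(m : ℝ)|)
    simpa using this
  refine squeeze_zero_norm ?_ hg
  intro n
  rw [locSeq]
  have hpos : (0 : ℝ) < (q : ℝ) ^ (r * n) := by positivity
  rw [Real.norm_eq_abs, abs_div, abs_of_pos hpos]
  have h1 : |((min 0 (vz v (φ^[n] x)) : ℤ) : ℝ)| ≤ |(m : ℝ)| := by
    have := hbound n
    have : (|(min 0 (vz v (φ^[n] x)) : ℤ)| : ℝ) ≤ (|m| : ℝ) := by exact_mod_cast this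
    simpa using this
  have h2 : (q : ℝ) ^ (r * n) = ((q : ℝ) ^ r) ^ n := by rw [← pow_mul]
  rw [h2, div_le_iff₀ (by positivity)]
  calc |((min 0 (vz v (φ^[n] x)) : ℤ) : ℝ)| ≤ |(m : ℝ)| := h1
    _ = |(m : ℝ)| * ((((q:ℝ)^r)⁻¹) ^ n * ((q:ℝ)^r) ^ n) := by
        rw [← mul_pow, inv_mul_cancel₀ (by positivity), one_pow, mul_one]
    _ = |(m : ℝ)| * (((q:ℝ)^r)⁻¹) ^ n * ((q:ℝ)^r) ^ n := by ring

end Drinfeld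
end
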